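/- arXiv:1511.01078 — 6 statements merged into one kernel-verified Lean document; each statement's English description precedes it below -/
import Mathlib

section
/- The determinant of the 2×2 matrix H(λ) with rows (1 - e^{-λL}, -w_λ(L)) and (∫_0^L conj(g(x)) e^{-λx} dx, ∫_0^L conj(g(x)) w_λ(x) dx - 1) equals w_λ(L) · (∫_0^L conj(g(x)) dx - λ). -/
open Complex MeasureTheory

theorem stmt2 (L : ℝ) (hL : 0 < L) (g : ℝ → ℂ)
    (hg : MemLp g 2 (volume.restrict (Set.Ioc 0 L))) (lam : ℂ)
    (w : ℂ → ℝ → ℂ) (hw : ∀ μ x, w μ x = ∫ σ in (0:ℝ)..x, Complex.exp (-μ * (x - σ))) :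
    Matrix.det
      !![1 - Complex.exp (-lam * L), -(w lam L);
         ∫ x in (0:ℝ)..L, (starRingEnd ℂ) (g x) * Complex.exp (-lam * x),
         (∫ x in (0:ℝ)..L, (starRingEnd ℂ) (g x) * w lam x) - 1]
      = w lam L * ((∫ x in (0:ℝ)..L, (starRingEnd ℂ) (g x)) - lam) := by
  have hgi : IntervalIntegrable (fun x => (starRingEnd ℂ) (g x)) volume 0 L := by
    rw [intervalIntegrable_iff_integrableOn_Ioc_of_le hL.le]
    haveI : IsFiniteMeasure (volume.restrict (Set.Ioc 0 L)) := by
      constructor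
      simp [Real.volume_Ioc]
    have h1 : Integrable g (volume.restrict (Set.Ioc 0 L)) :=
      hg.integrable (by norm_num)
    exact h1.norm.mono' ((Complex.continuous_conj.comp_aestronglyMeasurable h1.aestronglyMeasurable))
      (Filter.Eventually.of_forall fun x => by simp)
  rcases eq_or_ne lam 0 with h0 | h0
  · subst h0
    have hwL : w 0 L = (L : ℂ) := by
      rw [hw]; simp
    rw [Matrix.det_fin_two_of, hwL]
    have : (∫ x in (0:ℝ)..L, (starRingEnd ℂ) (g x) * Complex.exp (-0 * x))
        = ∫ x in (0:ℝ)..L, (starRingEnd ℂ) (g x) := by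
      simp
    rw [this]
    norm_num
  · have wf : ∀ x : ℝ, w lam x = (1 - Complex.exp (-lam * x)) / lam := by
      intro x
      rw [hw]
      have he : ∀ σ : ℝ, Complex.exp (-lam * (x - σ))
          = Complex.exp (-lam * x) * Complex.exp (lam * σ) := by
        intro σ; rw [← Complex.exp_add]; ring_nf
      simp_rw [he]
      rw [intervalIntegral.integral_const_mul, integral_exp_mul_complex h0]
      simp only [Complex.ofReal_zero, mul_zero, Complex.exp_zero]
      field_simp
      rw [mul_sub, ← Complex.exp_add]
      ring_nf
      simp
    have key : ∀ x : ℝ, lam * w lam x = 1 - Complex.exp (-lam * x) := by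
      intro x; rw [wf]; field_simp
    have hgw : IntervalIntegrable (fun x => (starRingEnd ℂ) (g x) * w lam x) volume 0 L := by
      apply hgi.mul_continuousOn
      have : Continuous fun x : ℝ => w lam x := by
        simp only [wf]; fun_prop
      exact this.continuousOn
    have hA : (∫ x in (0:ℝ)..L, (starRingEnd ℂ) (g x) * Complex.exp (-lam * x))
        = (∫ x in (0:ℝ)..L, (starRingEnd ℂ) (g x))
          - lam * ∫ x in (0:ℝ)..L, (starRingEnd ℂ) (g x) * w lam x := by
      have hcong : (∫ x in (0:ℝ)..L, (starRingEnd ℂ) (g x) * Complex.exp (-lam * x))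
          = ∫ x in (0:ℝ)..L,
              ((starRingEnd ℂ) (g x) - lam * ((starRingEnd ℂ) (g x) * w lam x)) := by
        apply intervalIntegral.integral_congr
        intro x _
        have hx : Complex.exp (-lam * x) = 1 - lam * w lam x := by
          rw [key x]; ring
        simp only [hx]; ring
      rw [hcong, intervalIntegral.integral_sub hgi (hgw.const_mul lam),
        intervalIntegral.integral_const_mul]
    rw [Matrix.det_fin_two_of, hA,
      show (1 - Complex.exp (-lam * L)) = lam * w lam L from (key L).symm]
    ring
end

section
/- A function z ∈ H¹(0,L) with z(L) = z(0) satisfies λz(x) + z'(x) - ∫_0^L conj(g(σ)) z(σ) dσ = 0 for a.e. x ∈ (0,L) if and only if z(x) = a e^{-λx} + b w_λ(x) for some (a,b) ∈ ℂ² with H(λ)·(a,b)ᵀ = 0, where H(λ) is the matrix with rows (1 - e^{-λL}, -w_λ(L)) and (∫_0^L conj(g(x)) e^{-λx} dx, ∫_0^L conj(g(x)) w_λ(x) dx - 1). -/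
open Complex MeasureTheory Set

lemma hasDerivAt_cexp_real (c : ℂ) (x : ℝ) :
    HasDerivAt (fun t : ℝ => Complex.exp (c * t)) (c * Complex.exp (c * x)) x := by
  have h1 : HasDerivAt (fun t : ℝ => (c * t : ℂ)) c x := by
    simpa using (Complex.ofRealCLM.hasDerivAt (x := x)).const_mul c
  simpa [mul_comm] using h1.cexp

/-- Eigenvalue equation for the periodic adjoint operator `Ã* z = -z' + (∫ conj g · z) 𝟙`:
a function `z ∈ H¹(0,L)` with `z(L) = z(0)` satisfies `Ã* z = λ z` iff
`z = a e^{-λx} + b w_λ(x)` with `H(λ) (a,b)ᵀ = 0`. -/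
theorem stmt3 (L : ℝ) (hL : 0 < L) (g : ℝ → ℂ)
    (hg : MemLp g 2 (volume.restrict (Set.Ioc 0 L))) (lam : ℂ)
    (w : ℝ → ℂ) (hw : ∀ x, w x = ∫ σ in (0:ℝ)..x, Complex.exp (-lam * (x - σ)))
    (z : ℝ → ℂ) (hzc : ContinuousOn z (Icc 0 L)) (hzd : DifferentiableOn ℝ z (Ioo 0 L))
    (hzL2 : MemLp z 2 (volume.restrict (Set.Ioc 0 L)))
    (hper : z L = z 0) :
    (∀ x ∈ Ioo (0:ℝ) L,
        lam * z x + deriv z x - (∫ σ in Set.Ioc (0:ℝ) L, (starRingEnd ℂ) (g σ) * z σ) = 0)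
      ↔ ∃ a b : ℂ,
          Matrix.mulVec
            !![1 - Complex.exp (-lam * L), -(w L);
               ∫ x in Set.Ioc (0:ℝ) L, (starRingEnd ℂ) (g x) * Complex.exp (-lam * x),
               (∫ x in Set.Ioc (0:ℝ) L, (starRingEnd ℂ) (g x) * w x) - 1]
            ![a, b] = 0
          ∧ ∀ x ∈ Icc (0:ℝ) L, z x = a * Complex.exp (-lam * x) + b * w x := by
  classical
  haveI : IsFiniteMeasure (volume.restrict (Set.Ioc (0:ℝ) L)) := by
    constructor
    rw [Measure.restrict_apply_univ]
    exact measure_Ioc_lt_top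
  -- the auxiliary antiderivative E
  set E : ℝ → ℂ := fun x => ∫ σ in (0:ℝ)..x, Complex.exp (lam * σ) with hE
  have hEd : ∀ x : ℝ, HasDerivAt E (Complex.exp (lam * x)) x := fun x =>
    (Continuous.integral_hasStrictDerivAt (by fun_prop) 0 x).hasDerivAt
  -- w in terms of E
  have hwE : ∀ x : ℝ, w x = Complex.exp (-lam * x) * E x := by
    intro x
    rw [hw, hE]
    rw [← intervalIntegral.integral_const_mul]
    congr 1
    ext σ
    rw [← Complex.exp_add]
    congr 1
    push_cast
    ring
  have hwd : ∀ x : ℝ, HasDerivAt w (-lam * w x + 1) x := by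
    intro x
    have h1 : HasDerivAt (fun t : ℝ => Complex.exp (-lam * t) * E t)
        ((-lam * Complex.exp (-lam * x)) * E x + Complex.exp (-lam * x) * Complex.exp (lam * x)) x :=
      (hasDerivAt_cexp_real (-lam) x).mul (hEd x)
    have h2 : HasDerivAt w
        ((-lam * Complex.exp (-lam * x)) * E x + Complex.exp (-lam * x) * Complex.exp (lam * x)) x := by
      apply h1.congr_of_eventuallyEq
      filter_upwards with t
      rw [hwE]
    have h3 : Complex.exp (-lam * x) * Complex.exp (lam * x) = 1 := by
      rw [← Complex.exp_add]; simp
    rw [hwE x]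
    convert h2 using 1
    rw [h3]; ring
  have hwc : Continuous w := by
    have : Differentiable ℝ w := fun x => (hwd x).differentiableAt
    exact this.continuous
  have hw0 : w 0 = 0 := by rw [hw]; simp
  have hexpc : Continuous (fun x : ℝ => Complex.exp (-lam * x)) := by fun_prop
  -- integrability of conj g * φ for continuous φ
  have hgint : Integrable (fun x => (starRingEnd ℂ) (g x)) (volume.restrict (Set.Ioc (0:ℝ) L)) := by
    refine MemLp.integrable one_le_two ?_
    refine MemLp.of_le hg ?_ ?_
    · exact (Complex.continuous_conj.comp_aestronglyMeasurable hg.1)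
    · filter_upwards with x; simp
  have hIφ : ∀ φ : ℝ → ℂ, Continuous φ →
      Integrable (fun x => (starRingEnd ℂ) (g x) * φ x) (volume.restrict (Set.Ioc (0:ℝ) L)) := by
    intro φ hφ
    obtain ⟨C, hC⟩ := isCompact_Icc.exists_bound_of_continuousOn (hφ.continuousOn (s := Icc 0 L))
    have hb : ∀ᵐ x ∂(volume.restrict (Set.Ioc (0:ℝ) L)), ‖φ x‖ ≤ C := by
      rw [ae_restrict_iff' measurableSet_Ioc]
      filter_upwards with x hx
      exact hC x (Ioc_subset_Icc_self hx)
    have := hgint.bdd_mul hφ.aestronglyMeasurable hb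
    simpa [mul_comm] using this
  have hIe := hIφ _ hexpc
  have hIw := hIφ _ hwc
  constructor
  · -- forward
    intro h
    set c := ∫ σ in Set.Ioc (0:ℝ) L, (starRingEnd ℂ) (g σ) * z σ with hc
    set u : ℝ → ℂ := fun x => Complex.exp (lam * x) * z x - c * E x with hu
    have hu0 : ∀ x ∈ Ioo (0:ℝ) L, HasDerivAt u 0 x := by
      intro x hx
      have hzx : HasDerivAt z (deriv z x) x :=
        ((hzd x hx).differentiableAt (isOpen_Ioo.mem_nhds hx)).hasDerivAt
      have hz' : deriv z x = c - lam * z x := by linear_combination h x hx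
      have h1 : HasDerivAt u
          ((lam * Complex.exp (lam * x)) * z x + Complex.exp (lam * x) * deriv z x
            - c * Complex.exp (lam * x)) x :=
        ((hasDerivAt_cexp_real lam x).mul hzx).sub ((hEd x).const_mul c)
      convert h1 using 1
      rw [hz']; ring
    have hm : L / 2 ∈ Ioo (0:ℝ) L := ⟨by linarith, by linarith⟩
    have hdiff : DifferentiableOn ℝ u (Ioo 0 L) := fun x hx =>
      ((hu0 x hx).differentiableAt).differentiableWithinAt
    have hf0 : ∀ x ∈ Ioo (0:ℝ) L, fderivWithin ℝ u (Ioo 0 L) x = 0 := by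
      intro x hx
      rw [fderivWithin_of_isOpen isOpen_Ioo hx]
      have h0 : HasFDerivAt u (0 : ℝ →L[ℝ] ℂ) x := by
        have := (hu0 x hx).hasFDerivAt
        convert this using 1
        ext v
        simp
        simp
      exact h0.fderiv
    obtain ⟨a, ha⟩ : ∃ a : ℂ, ∀ x ∈ Ioo (0:ℝ) L, u x = a :=
      ⟨u (L / 2), fun x hx =>
        (convex_Ioo (0:ℝ) L).is_const_of_fderivWithin_eq_zero hdiff hf0 hx hm⟩
    have hIoo : ∀ x ∈ Ioo (0:ℝ) L, z x = a * Complex.exp (-lam * x) + c * w x := by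
      intro x hx
      have hux : Complex.exp (lam * x) * z x - c * E x = a := ha x hx
      have hne : Complex.exp (lam * x) ≠ 0 := Complex.exp_ne_zero _
      rw [hwE, neg_mul, Complex.exp_neg]
      field_simp
      linear_combination hux
    have hrep : ∀ x ∈ Icc (0:ℝ) L, z x = a * Complex.exp (-lam * x) + c * w x := by
      have hcont2 : ContinuousOn (fun x : ℝ => a * Complex.exp (-lam * x) + c * w x) (Icc 0 L) :=
        ((continuous_const.mul hexpc).add (continuous_const.mul hwc)).continuousOn
      have heq := Set.EqOn.of_subset_closure (s := Ioo (0:ℝ) L) (t := Icc (0:ℝ) L)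
        (fun x hx => hIoo x hx) hzc hcont2 Ioo_subset_Icc_self
        (by rw [closure_Ioo hL.ne])
      exact fun x hx => heq hx
    refine ⟨a, c, ?_, hrep⟩
    have hz0 : z 0 = a := by
      have := hrep 0 ⟨le_refl 0, hL.le⟩
      simpa [hw0] using this
    have hzL : z L = a * Complex.exp (-lam * L) + c * w L := hrep L ⟨hL.le, le_refl L⟩
    have hcz : c = a * (∫ x in Set.Ioc (0:ℝ) L, (starRingEnd ℂ) (g x) * Complex.exp (-lam * x))
        + c * (∫ x in Set.Ioc (0:ℝ) L, (starRingEnd ℂ) (g x) * w x) := by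
      have hcongr : c = ∫ x in Set.Ioc (0:ℝ) L,
          ((starRingEnd ℂ) (g x) * (a * Complex.exp (-lam * x) + c * w x)) := by
        rw [hc]
        refine setIntegral_congr_fun measurableSet_Ioc (fun x hx => ?_)
        rw [hrep x (Ioc_subset_Icc_self hx)]
      have heq : ∀ x : ℝ, (starRingEnd ℂ) (g x) * (a * Complex.exp (-lam * x) + c * w x)
          = a * ((starRingEnd ℂ) (g x) * Complex.exp (-lam * x))
            + c * ((starRingEnd ℂ) (g x) * w x) := fun x => by ring
      have hsplit : (∫ x in Set.Ioc (0:ℝ) L,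
            ((starRingEnd ℂ) (g x) * (a * Complex.exp (-lam * x) + c * w x)))
          = a * (∫ x in Set.Ioc (0:ℝ) L, (starRingEnd ℂ) (g x) * Complex.exp (-lam * x))
            + c * (∫ x in Set.Ioc (0:ℝ) L, (starRingEnd ℂ) (g x) * w x) := by
        simp_rw [heq]
        rw [integral_add (hIe.const_mul a) (hIw.const_mul c), integral_const_mul,
          integral_const_mul]
      exact hcongr.trans hsplit
    have hrow1 : (1 - Complex.exp (-lam * L)) * a + -(w L) * c = 0 := by
      linear_combination hzL - hz0 - hper
    have hrow2 : (∫ x in Set.Ioc (0:ℝ) L, (starRingEnd ℂ) (g x) * Complex.exp (-lam * x)) * a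
        + ((∫ x in Set.Ioc (0:ℝ) L, (starRingEnd ℂ) (g x) * w x) - 1) * c = 0 := by
      linear_combination -hcz
    funext i
    simp only [neg_mul] at hrow1 hrow2
    fin_cases i <;>
      simp [Matrix.mulVec, dotProduct, Fin.sum_univ_two]
    · linear_combination hrow1
    · linear_combination hrow2
  · -- backward
    rintro ⟨a, b, hmat, hrep⟩
    have h2 := congrFun hmat 1
    simp [Matrix.mulVec, dotProduct, Fin.sum_univ_two] at h2
    have hint : (∫ σ in Set.Ioc (0:ℝ) L, (starRingEnd ℂ) (g σ) * z σ) = b := by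
      have hcongr : (∫ σ in Set.Ioc (0:ℝ) L, (starRingEnd ℂ) (g σ) * z σ)
          = ∫ x in Set.Ioc (0:ℝ) L,
              ((starRingEnd ℂ) (g x) * (a * Complex.exp (-lam * x) + b * w x)) := by
        refine setIntegral_congr_fun measurableSet_Ioc (fun x hx => ?_)
        rw [hrep x (Ioc_subset_Icc_self hx)]
      have heq : ∀ x : ℝ, (starRingEnd ℂ) (g x) * (a * Complex.exp (-lam * x) + b * w x)
          = a * ((starRingEnd ℂ) (g x) * Complex.exp (-lam * x))
            + b * ((starRingEnd ℂ) (g x) * w x) := fun x => by ring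
      rw [hcongr]
      simp_rw [heq]
      rw [integral_add (hIe.const_mul a) (hIw.const_mul b), integral_const_mul, integral_const_mul]
      simp only [neg_mul]
      linear_combination h2
    intro x hx
    have hxm : Icc (0:ℝ) L ∈ nhds x := Icc_mem_nhds hx.1 hx.2
    have hev : (fun t : ℝ => a * Complex.exp (-lam * t) + b * w t) =ᶠ[nhds x] z := by
      filter_upwards [hxm] with t ht
      exact (hrep t ht).symm
    have hf : HasDerivAt (fun t : ℝ => a * Complex.exp (-lam * t) + b * w t)
        (-lam * (a * Complex.exp (-lam * x) + b * w x) + b) x := by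
      have := ((hasDerivAt_cexp_real (-lam) x).const_mul a).add ((hwd x).const_mul b)
      convert this using 1
      case e'_9 => ring
      all_goals rfl
    have hz' : HasDerivAt z (-lam * (a * Complex.exp (-lam * x) + b * w x) + b) x :=
      hf.congr_of_eventuallyEq hev.symm
    rw [hz'.deriv, hint, hrep x (Ioo_subset_Icc_self hx)]
    ring
end

section
/- The spectrum of the operator Ã* consists exactly of the eigenvalues λ_k = 2ikπ/L for k ∈ ℤ\{0} together with λ_0 = ∫_0^L conj(g(x)) dx. -/
open Complex MeasureTheory Set Filter Topology

lemma constOn (f : ℝ → ℂ) {a b : ℝ} (hab : a < b) (hcont : ContinuousOn f (Icc a b))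
    (hderiv : ∀ x ∈ Ioo a b, HasDerivAt f 0 x) : ∀ x ∈ Icc a b, f x = f b := by
  have key : ∀ a' ∈ Ioo a b, ∀ x ∈ Icc a' b, f x = f a' := by
    intro a' ha' x hx
    exact constant_of_has_deriv_right_zero
      (hcont.mono (Icc_subset_Icc ha'.1.le le_rfl))
      (fun y hy => (hderiv y ⟨lt_of_lt_of_le ha'.1 hy.1, hy.2⟩).hasDerivWithinAt) x hx
  have hIoc : ∀ x ∈ Ioc a b, f x = f b := by
    intro x hx
    rcases eq_or_lt_of_le hx.2 with h | h
    · rw [h]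
    · exact (key x ⟨hx.1, h⟩ b ⟨h.le, le_rfl⟩).symm
  intro x hx
  rcases eq_or_lt_of_le hx.1 with h | h
  · subst h
    haveI : (𝓝[Ioc a b] a).NeBot := by
      apply mem_closure_iff_nhdsWithin_neBot.1
      rw [closure_Ioc hab.ne]
      exact left_mem_Icc.2 hab.le
    have h1 : Tendsto f (𝓝[Ioc a b] a) (𝓝 (f a)) :=
      ((hcont a (left_mem_Icc.2 hab.le)).mono Ioc_subset_Icc_self)
    have h2 : Tendsto f (𝓝[Ioc a b] a) (𝓝 (f b)) := by
      refine Tendsto.congr' ?_ tendsto_const_nhds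
      exact (eventually_mem_nhdsWithin.mono fun y hy => (hIoc y hy).symm)
    exact tendsto_nhds_unique h1 h2
  · exact hIoc x ⟨h, hx.2⟩

lemma finmeas {L : ℝ} : IsFiniteMeasure (volume.restrict (Ioc (0:ℝ) L)) := by
  constructor
  simp [Real.volume_Ioc]

lemma eig_const (L : ℝ) (hL : 0 < L) (g : ℝ → ℂ) :
    ∃ z : ℝ → ℂ, ContinuousOn z (Icc 0 L) ∧ DifferentiableOn ℝ z (Ioo 0 L) ∧
      MemLp z 2 (volume.restrict (Ioc 0 L)) ∧ z L = z 0 ∧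
      (∀ x ∈ Ioo (0:ℝ) L,
        -(deriv z x) + (∫ σ in Ioc (0:ℝ) L, (starRingEnd ℂ) (g σ) * z σ)
          = (∫ x in Ioc (0:ℝ) L, (starRingEnd ℂ) (g x)) * z x) ∧
      ¬(∀ x ∈ Icc (0:ℝ) L, z x = 0) := by
  haveI := finmeas (L := L)
  refine ⟨fun _ => 1, continuousOn_const, differentiableOn_const 1, memLp_const 1, rfl, ?_, ?_⟩
  · intro x hx
    simp [deriv_const]
  · intro h
    exact one_ne_zero (h 0 (left_mem_Icc.2 hL.le))

lemma eig_exp (L : ℝ) (hL : 0 < L) (g : ℝ → ℂ)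
    (hg : MemLp g 2 (volume.restrict (Set.Ioc 0 L)))
    (k : ℤ) (hk : k ≠ 0) (lam : ℂ) (hlam : lam = 2 * Complex.I * k * Real.pi / L)
    (hne : lam ≠ ∫ x in Set.Ioc (0:ℝ) L, (starRingEnd ℂ) (g x)) :
    ∃ z : ℝ → ℂ, ContinuousOn z (Icc 0 L) ∧ DifferentiableOn ℝ z (Ioo 0 L) ∧
      MemLp z 2 (volume.restrict (Ioc 0 L)) ∧ z L = z 0 ∧
      (∀ x ∈ Ioo (0:ℝ) L,
        -(deriv z x) + (∫ σ in Ioc (0:ℝ) L, (starRingEnd ℂ) (g σ) * z σ) = lam * z x) ∧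
      ¬(∀ x ∈ Icc (0:ℝ) L, z x = 0) := by
  haveI : IsFiniteMeasure (volume.restrict (Ioc (0:ℝ) L)) := by
    constructor; simp [Real.volume_Ioc]
  have hLne : (L : ℂ) ≠ 0 := Complex.ofReal_ne_zero.2 hL.ne'
  have hkR : ((k : ℝ)) ≠ 0 := Int.cast_ne_zero.2 hk
  have hkC : ((k : ℂ)) ≠ 0 := Int.cast_ne_zero.2 hk
  set G0 := ∫ x in Set.Ioc (0:ℝ) L, (starRingEnd ℂ) (g x) with hG0
  set Gl := ∫ σ in Set.Ioc (0:ℝ) L, (starRingEnd ℂ) (g σ) * Complex.exp (-(lam * σ)) with hGl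
  set D := Gl / (lam - G0) with hD
  set z : ℝ → ℂ := fun x => Complex.exp (-(lam * x)) + D with hz
  -- derivative
  have hder : ∀ x : ℝ, HasDerivAt z (-lam * Complex.exp (-(lam * x))) x := by
    intro x
    have h1 : HasDerivAt (fun t : ℝ => -(lam * (t : ℂ))) (-lam) x := by
      simpa using ((Complex.ofRealCLM.hasDerivAt (x := x)).const_mul lam).fun_neg
    have h2 := h1.cexp
    have h3 := h2.add_const D
    exact h3.congr_deriv (by ring)
  have hcont : Continuous z := by
    have : Continuous fun x : ℝ => Complex.exp (-(lam * x)) :=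
      Complex.continuous_exp.comp ((continuous_const.mul Complex.continuous_ofReal).neg)
    exact this.add continuous_const
  -- norm of exp is 1
  have habs : ∀ x : ℝ, ‖Complex.exp (-(lam * x))‖ = 1 := by
    intro x
    have : -(lam * x) = ((-(2 * k * Real.pi * x / L) : ℝ) : ℂ) * Complex.I := by
      rw [hlam]; push_cast; ring
    rw [this, Complex.norm_exp_ofReal_mul_I]
  -- integrability
  have hgint : Integrable g (volume.restrict (Ioc (0:ℝ) L)) := hg.integrable one_le_two
  have hcg : Integrable (fun x => (starRingEnd ℂ) (g x)) (volume.restrict (Ioc (0:ℝ) L)) := by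
    refine ⟨Complex.continuous_conj.comp_aestronglyMeasurable hgint.1, ?_⟩
    simpa [HasFiniteIntegral] using hgint.2
  have hI1 : Integrable (fun σ => (starRingEnd ℂ) (g σ) * Complex.exp (-(lam * σ)))
      (volume.restrict (Ioc (0:ℝ) L)) := by
    have := hcg.bdd_mul
      (Complex.continuous_exp.comp ((continuous_const.mul Complex.continuous_ofReal).neg)).aestronglyMeasurable
      (ae_of_all _ fun x => le_of_eq (habs x))
    simpa [mul_comm] using this
  have hI2 : Integrable (fun σ => (starRingEnd ℂ) (g σ) * D) (volume.restrict (Ioc (0:ℝ) L)) :=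
    hcg.mul_const D
  have hsplit : (∫ σ in Ioc (0:ℝ) L, (starRingEnd ℂ) (g σ) * z σ) = Gl + G0 * D := by
    simp only [hz, mul_add]
    rw [integral_add hI1 hI2, integral_mul_const]
  refine ⟨z, hcont.continuousOn,
    (Differentiable.differentiableOn (fun x => (hder x).differentiableAt)), ?_, ?_, ?_, ?_⟩
  · -- MemLp
    refine MemLp.of_bound hcont.aestronglyMeasurable (1 + ‖D‖) ?_
    filter_upwards with x
    calc ‖z x‖ ≤ ‖Complex.exp (-(lam * x))‖ + ‖D‖ := norm_add_le _ _
    _ = 1 + ‖D‖ := by rw [habs]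
  · -- periodicity
    have h1 : -(lam * (L : ℂ)) = ((-k : ℤ) : ℂ) * (2 * Real.pi * Complex.I) := by
      rw [hlam]; push_cast; field_simp
    show Complex.exp (-(lam * (L:ℝ))) + D = Complex.exp (-(lam * (0:ℝ))) + D
    push_cast
    rw [h1, Complex.exp_int_mul_two_pi_mul_I]
    simp
  · -- equation
    intro x hx
    rw [(hder x).deriv, hsplit]
    have hsub : lam - G0 ≠ 0 := sub_ne_zero.2 hne
    have key : Gl + G0 * (Gl / (lam - G0)) = lam * (Gl / (lam - G0)) := by
      field_simp
      ring
    rw [hD]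
    linear_combination key
  · -- nontrivial
    intro h
    set x₀ := L / (2 * |(k : ℝ)|) with hx₀
    have hk1 : (1 : ℝ) ≤ |(k : ℝ)| := by
      rw [← Int.cast_abs]
      exact_mod_cast Int.one_le_abs hk
    have hx₀mem : x₀ ∈ Icc 0 L := by
      constructor
      · positivity
      · rw [hx₀]
        apply div_le_self hL.le
        linarith
    have h0 := h 0 (left_mem_Icc.2 hL.le)
    have h1 := h x₀ hx₀mem
    have hexp : Complex.exp (-(lam * (x₀ : ℝ))) = -1 := by
      rcases hk.lt_or_gt with hkneg | hkpos
      · have habs' : |(k : ℝ)| = -k := abs_of_neg (by exact_mod_cast hkneg)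
        have : -(lam * (x₀ : ℝ)) = (Real.pi : ℂ) * Complex.I := by
          rw [hlam, hx₀, habs']; push_cast; field_simp
        rw [this, Complex.exp_pi_mul_I]
      · have habs' : |(k : ℝ)| = k := abs_of_pos (by exact_mod_cast hkpos)
        have : -(lam * (x₀ : ℝ)) = -((Real.pi : ℂ) * Complex.I) := by
          rw [hlam, hx₀, habs']; push_cast; field_simp
        rw [this, Complex.exp_neg, Complex.exp_pi_mul_I]
        norm_num
    have h0' : Complex.exp (-(lam * ((0:ℝ) : ℂ))) + D = 0 := h0
    have h1' : Complex.exp (-(lam * ((x₀:ℝ) : ℂ))) + D = 0 := h1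
    rw [hexp] at h1'
    simp only [Complex.ofReal_zero, mul_zero, neg_zero, Complex.exp_zero] at h0'
    have : (2 : ℂ) = 0 := by linear_combination h0' - h1'
    norm_num at this

lemma forward (L : ℝ) (hL : 0 < L) (g : ℝ → ℂ) (lam : ℂ) (z : ℝ → ℂ)
    (hzc : ContinuousOn z (Icc 0 L)) (hzd : DifferentiableOn ℝ z (Ioo 0 L))
    (hzp : z L = z 0)
    (hze : ∀ x ∈ Ioo (0:ℝ) L,
      -(deriv z x) + (∫ σ in Set.Ioc (0:ℝ) L, (starRingEnd ℂ) (g σ) * z σ) = lam * z x)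
    (hznt : ¬(∀ x ∈ Icc (0:ℝ) L, z x = 0)) :
    (∃ k : ℤ, k ≠ 0 ∧ lam = 2 * Complex.I * k * Real.pi / L) ∨
      lam = ∫ x in Set.Ioc (0:ℝ) L, (starRingEnd ℂ) (g x) := by
  have hLne : (L : ℂ) ≠ 0 := Complex.ofReal_ne_zero.2 hL.ne'
  set G0 := ∫ x in Set.Ioc (0:ℝ) L, (starRingEnd ℂ) (g x) with hG0
  set C := ∫ σ in Set.Ioc (0:ℝ) L, (starRingEnd ℂ) (g σ) * z σ with hC
  have hde : ∀ x ∈ Ioo (0:ℝ) L, HasDerivAt z (C - lam * z x) x := by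
    intro x hx
    have h1 : HasDerivAt z (deriv z x) x :=
      ((hzd x hx).differentiableAt (Ioo_mem_nhds hx.1 hx.2)).hasDerivAt
    have h2 : deriv z x = C - lam * z x := by linear_combination -(hze x hx)
    rwa [h2] at h1
  by_cases hlam0 : lam = 0
  · -- λ = 0
    subst hlam0
    set w : ℝ → ℂ := fun x => z x - C * x with hw
    have hwc : ContinuousOn w (Icc 0 L) :=
      hzc.sub ((continuous_const.mul Complex.continuous_ofReal).continuousOn)
    have hwd : ∀ x ∈ Ioo (0:ℝ) L, HasDerivAt w 0 x := by
      intro x hx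
      have h2 : HasDerivAt (fun t : ℝ => C * (t : ℂ)) C x := by
        simpa using (Complex.ofRealCLM.hasDerivAt (x := x)).const_mul C
      have h3 := (hde x hx).fun_sub h2
      simpa using h3
    have hconst := constOn w hL hwc hwd
    have h0 := hconst 0 (left_mem_Icc.2 hL.le)
    have hC0 : C = 0 := by
      have h1 : z 0 - C * ((0:ℝ):ℂ) = z L - C * ((L:ℝ):ℂ) := h0
      rw [hzp] at h1
      have h2 : C * (L:ℂ) = 0 := by push_cast at h1; linear_combination h1
      exact (mul_eq_zero.1 h2).resolve_right hLne
    have hzconst : ∀ x ∈ Icc (0:ℝ) L, z x = z L := by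
      intro x hx
      have h1 : z x - C * ((x:ℝ):ℂ) = z L - C * ((L:ℝ):ℂ) := hconst x hx
      rw [hC0] at h1
      simpa using h1
    have hzL : z L ≠ 0 := by
      intro h
      exact hznt fun x hx => by rw [hzconst x hx, h]
    have hCG : C = G0 * z L := by
      rw [hC, ← integral_mul_const]
      apply setIntegral_congr_fun measurableSet_Ioc
      intro σ hσ
      show (starRingEnd ℂ) (g σ) * z σ = (starRingEnd ℂ) (g σ) * z L
      rw [hzconst σ (Ioc_subset_Icc_self hσ)]
    right
    have : G0 * z L = 0 := by rw [← hCG, hC0]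
    rcases mul_eq_zero.1 this with h | h
    · rw [h]
    · exact absurd h hzL
  · -- λ ≠ 0
    set w : ℝ → ℂ := fun x => Complex.exp (lam * x) * (z x - C / lam) with hw
    have hwc : ContinuousOn w (Icc 0 L) :=
      ((Complex.continuous_exp.comp (continuous_const.mul Complex.continuous_ofReal)).continuousOn).mul
        (hzc.sub continuousOn_const)
    have hwd : ∀ x ∈ Ioo (0:ℝ) L, HasDerivAt w 0 x := by
      intro x hx
      have he : HasDerivAt (fun t : ℝ => Complex.exp (lam * t)) (Complex.exp (lam * x) * lam) x := by
        have h1 : HasDerivAt (fun t : ℝ => lam * (t : ℂ)) lam x := by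
          simpa using (Complex.ofRealCLM.hasDerivAt (x := x)).const_mul lam
        simpa using h1.cexp
      have hz' : HasDerivAt (fun t => z t - C / lam) (C - lam * z x) x := (hde x hx).sub_const _
      have := he.fun_mul hz'
      exact this.congr_deriv (by field_simp; ring)
    have hconst := constOn w hL hwc hwd
    set A := w L with hA
    have hzx : ∀ x ∈ Icc (0:ℝ) L, z x = A * Complex.exp (-(lam * x)) + C / lam := by
      intro x hx
      have h := hconst x hx
      have hexp : Complex.exp (lam * x) ≠ 0 := Complex.exp_ne_zero _
      have h2 : z x - C / lam = A * Complex.exp (-(lam * x)) := by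
        rw [Complex.exp_neg, mul_comm A, inv_mul_eq_div, eq_div_iff hexp]
        linear_combination h
      linear_combination h2
    have hper : A * (Complex.exp (-(lam * L)) - 1) = 0 := by
      have h0 := hzx 0 (left_mem_Icc.2 hL.le)
      have hLe := hzx L (right_mem_Icc.2 hL.le)
      rw [hzp] at hLe
      simp only [Complex.ofReal_zero, mul_zero, neg_zero, Complex.exp_zero, mul_one] at h0
      linear_combination h0 - hLe
    rcases mul_eq_zero.1 hper with hA0 | hE
    · -- A = 0
      have hzc' : ∀ x ∈ Icc (0:ℝ) L, z x = C / lam := by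
        intro x hx
        simpa [hA0] using hzx x hx
      have hCne : C ≠ 0 := by
        intro h
        exact hznt fun x hx => by simp [hzc' x hx, h]
      have hCG : C = G0 * (C / lam) := by
        rw [hC, ← integral_mul_const]
        apply setIntegral_congr_fun measurableSet_Ioc
        intro σ hσ
        show (starRingEnd ℂ) (g σ) * z σ = (starRingEnd ℂ) (g σ) * (C / lam)
        rw [hzc' σ (Ioc_subset_Icc_self hσ)]
      right
      have h2 : lam * C = G0 * C := by
        field_simp at hCG
        linear_combination C * hCG
      exact mul_right_cancel₀ hCne h2
    · -- exp(-λL) = 1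
      have h1 : Complex.exp (-(lam * L)) = 1 := by
        have := sub_eq_zero.1 hE
        exact this
      rw [Complex.exp_eq_one_iff] at h1
      obtain ⟨n, hn⟩ := h1
      left
      refine ⟨-n, ?_, ?_⟩
      · intro h
        apply hlam0
        have hn0 : (n : ℂ) = 0 := by
          have : n = 0 := by omega
          simp [this]
        rw [hn0, zero_mul] at hn
        have : lam * L = 0 := by linear_combination -hn
        exact (mul_eq_zero.1 this).resolve_right hLne
      · push_cast
        field_simp
        linear_combination -(hn)

/-- The set of eigenvalues of `Ã* z = -z' + ∫ conj g · z` with periodic domain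
`{z ∈ H¹(0,L) : z(L) = z(0)}` is `{2ikπ/L : k ∈ ℤ, k ≠ 0} ∪ {∫ conj g}`. -/
theorem stmt4 (L : ℝ) (hL : 0 < L) (g : ℝ → ℂ)
    (hg : MemLp g 2 (volume.restrict (Set.Ioc 0 L))) :
    {lam : ℂ | ∃ z : ℝ → ℂ,
        ContinuousOn z (Icc 0 L) ∧ DifferentiableOn ℝ z (Ioo 0 L) ∧
        MemLp z 2 (volume.restrict (Set.Ioc 0 L)) ∧ z L = z 0 ∧
        (∀ x ∈ Ioo (0:ℝ) L,
          -(deriv z x) + (∫ σ in Set.Ioc (0:ℝ) L, (starRingEnd ℂ) (g σ) * z σ) = lam * z x) ∧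
        ¬ (∀ x ∈ Icc (0:ℝ) L, z x = 0)}
      = {lam : ℂ | ∃ k : ℤ, k ≠ 0 ∧ lam = 2 * Complex.I * k * Real.pi / L}
        ∪ {∫ x in Set.Ioc (0:ℝ) L, (starRingEnd ℂ) (g x)} := by
  ext lam
  simp only [mem_setOf_eq, mem_union, mem_singleton_iff]
  constructor
  · rintro ⟨z, hzc, hzd, _, hzp, hze, hznt⟩
    exact forward L hL g lam z hzc hzd hzp hze hznt
  · rintro (⟨k, hk, hlam⟩ | hlam)
    · by_cases hne : lam = ∫ x in Set.Ioc (0:ℝ) L, (starRingEnd ℂ) (g x)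
      · rw [hne]
        exact eig_const L hL g
      · exact eig_exp L hL g hg k hk lam hlam hne
    · rw [hlam]
      exact eig_const L hL g
end

section
/- If λ_0 = ∫_0^L conj(g) dx differs from λ_k = 2ikπ/L for all nonzero integers k, then for each nonzero k the eigenspace ker(λ_k - Ã*) is one-dimensional, spanned by φ_k(x) = e^{-λ_k x} + (1/(λ_k - λ_0)) ∫_0^L conj(g(y)) e^{-λ_k y} dy, and ker(λ_0 - Ã*) is spanned by the constant function 1. -/
open Complex MeasureTheory Set Topology Filter

private lemma const_on_Icc' {a b : ℝ} (hab : a < b) {F : ℝ → ℂ}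
    (hc : ContinuousOn F (Icc a b))
    (hd : ∀ x ∈ Ioo a b, HasDerivAt F 0 x) :
    ∀ x ∈ Icc a b, F x = F a := by
  set m := (a + b) / 2 with hm
  have hmem : m ∈ Ioo a b := ⟨by simp [hm]; linarith, by simp [hm]; linarith⟩
  have hIoo : ∀ x ∈ Ioo a b, F x = F m := by
    intro x hx
    refine (convex_Ioo a b).is_const_of_fderivWithin_eq_zero
      (fun y hy => ((hd y hy).differentiableAt).differentiableWithinAt) ?_ hx hmem
    intro y hy
    rw [fderivWithin_of_isOpen isOpen_Ioo hy]
    rw [(hd y hy).hasFDerivAt.fderiv]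
    ext
    simp
  have limfac : ∀ p ∈ Icc a b, (𝓝[Ioo a b] p).NeBot → F p = F m := by
    intro p hp hnb
    have h1 : Filter.Tendsto F (𝓝[Ioo a b] p) (𝓝 (F p)) :=
      ((hc p hp).mono Ioo_subset_Icc_self).tendsto
    have h2 : Filter.Tendsto F (𝓝[Ioo a b] p) (𝓝 (F m)) := by
      refine Filter.Tendsto.congr' ?_ tendsto_const_nhds
      exact Filter.eventually_of_mem self_mem_nhdsWithin fun y hy => (hIoo y hy).symm
    exact tendsto_nhds_unique h1 h2
  have hFa : F a = F m :=
    limfac a ⟨le_refl a, hab.le⟩ (left_nhdsWithin_Ioo_neBot hab)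
  intro x hx
  rcases eq_or_lt_of_le hx.1 with h | h
  · rw [← h]
  rcases eq_or_lt_of_le hx.2 with h' | h'
  · rw [h', limfac b ⟨hab.le, le_refl b⟩ (right_nhdsWithin_Ioo_neBot hab), hFa]
  · rw [hIoo x ⟨h, h'⟩, hFa]

private lemma hasDerivAt_cexp_mul' (lam : ℂ) (x : ℝ) :
    HasDerivAt (fun x : ℝ => Complex.exp (lam * x)) (lam * Complex.exp (lam * x)) x := by
  have h1 : HasDerivAt (fun x : ℝ => lam * (x : ℂ)) lam x := by
    simpa using (Complex.ofRealCLM.hasDerivAt (x := x)).const_mul lam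
  simpa [mul_comm] using h1.cexp

private lemma ode_form' {L : ℝ} (hL : 0 < L) {z : ℝ → ℂ} {lam K : ℂ} (hlam : lam ≠ 0)
    (hc : ContinuousOn z (Icc 0 L)) (hd : DifferentiableOn ℝ z (Ioo 0 L))
    (heq : ∀ x ∈ Ioo (0:ℝ) L, deriv z x = K - lam * z x) :
    ∀ x ∈ Icc (0:ℝ) L, z x = (z 0 - K/lam) * Complex.exp (-lam * x) + K/lam := by
  set F : ℝ → ℂ := fun x => Complex.exp (lam * x) * z x - K/lam * Complex.exp (lam * x) with hF
  have hFc : ContinuousOn F (Icc 0 L) := by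
    apply ContinuousOn.sub
    · exact ((Complex.continuous_exp.comp
        (continuous_const.mul Complex.continuous_ofReal)).continuousOn).mul hc
    · exact (continuous_const.mul (Complex.continuous_exp.comp
        (continuous_const.mul Complex.continuous_ofReal))).continuousOn
  have hFd : ∀ x ∈ Ioo (0:ℝ) L, HasDerivAt F 0 x := by
    intro x hx
    have hzd : HasDerivAt z (deriv z x) x :=
      (hd.differentiableAt (isOpen_Ioo.mem_nhds hx)).hasDerivAt
    have h1 := ((hasDerivAt_cexp_mul' lam x).mul hzd).sub
      ((hasDerivAt_cexp_mul' lam x).const_mul (K/lam))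
    have h2 : lam * Complex.exp (lam * x) * z x + Complex.exp (lam * x) * deriv z x
        - K/lam * (lam * Complex.exp (lam * x)) = 0 := by
      rw [heq x hx]; field_simp; ring
    rw [h2] at h1
    exact h1
  have key := const_on_Icc' hL hFc hFd
  intro x hx
  have h3 := key x hx
  have h0 : F 0 = z 0 - K/lam := by simp [hF]
  rw [h0] at h3
  have hne : Complex.exp (lam * x) ≠ 0 := Complex.exp_ne_zero _
  have hinv : Complex.exp (-lam * x) = (Complex.exp (lam * x))⁻¹ := by
    rw [← Complex.exp_neg]; ring_nf
  rw [hinv]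
  simp only [hF] at h3
  apply mul_left_cancel₀ hne
  rw [mul_add, mul_comm (cexp (lam * (x:ℂ))) ((z 0 - K/lam) * (cexp (lam * (x:ℂ)))⁻¹),
    mul_assoc, inv_mul_cancel₀ hne, mul_one]
  linear_combination h3

private lemma ode_form0' {L : ℝ} (hL : 0 < L) {z : ℝ → ℂ} {K : ℂ}
    (hc : ContinuousOn z (Icc 0 L)) (hd : DifferentiableOn ℝ z (Ioo 0 L))
    (heq : ∀ x ∈ Ioo (0:ℝ) L, deriv z x = K) :
    ∀ x ∈ Icc (0:ℝ) L, z x = z 0 + K * x := by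
  set F : ℝ → ℂ := fun x => z x - K * x with hF
  have hFc : ContinuousOn F (Icc 0 L) :=
    hc.sub (continuous_const.mul Complex.continuous_ofReal).continuousOn
  have hFd : ∀ x ∈ Ioo (0:ℝ) L, HasDerivAt F 0 x := by
    intro x hx
    have hzd : HasDerivAt z (deriv z x) x :=
      (hd.differentiableAt (isOpen_Ioo.mem_nhds hx)).hasDerivAt
    have h1 := hzd.sub ((Complex.ofRealCLM.hasDerivAt (x := x)).const_mul K)
    have h2 : deriv z x - K * Complex.ofRealCLM 1 = 0 := by
      rw [heq x hx]; simp
    rw [h2] at h1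
    exact h1
  have key := const_on_Icc' hL hFc hFd
  intro x hx
  have h3 := key x hx
  simp only [hF] at h3
  push_cast at h3
  linear_combination h3

/-- Under `λ₀ ≠ λ_k` for all `k ≠ 0`, each eigenspace of `Ã*` is one dimensional:
`ker(λ_k - Ã*)` is spanned by `φ_k(x) = e^{-λ_k x} + (1/(λ_k-λ_0)) ∫ conj g e^{-λ_k ·}`
for `k ≠ 0`, and `ker(λ₀ - Ã*)` is spanned by the constant function `1`. -/
theorem stmt5 (L : ℝ) (hL : 0 < L) (g : ℝ → ℂ)
    (hg : MemLp g 2 (volume.restrict (Set.Ioc 0 L)))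
    (lam : ℤ → ℂ)
    (hlamk : ∀ k : ℤ, k ≠ 0 → lam k = 2 * Real.pi * Complex.I * k / L)
    (hlam0 : lam 0 = ∫ x in Set.Ioc (0:ℝ) L, (starRingEnd ℂ) (g x))
    (hdisj : ∀ k : ℤ, k ≠ 0 → lam 0 ≠ lam k)
    (φ : ℤ → ℝ → ℂ)
    (hφ0 : ∀ x, φ 0 x = 1)
    (hφk : ∀ k : ℤ, k ≠ 0 → ∀ x, φ k x =
      Complex.exp (-(lam k) * x) +
        (1 / (lam k - lam 0)) * ∫ y in Set.Ioc (0:ℝ) L,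
          (starRingEnd ℂ) (g y) * Complex.exp (-(lam k) * y)) :
    ∀ k : ℤ, ∀ z : ℝ → ℂ,
      (ContinuousOn z (Icc 0 L) ∧ DifferentiableOn ℝ z (Ioo 0 L) ∧
        MemLp z 2 (volume.restrict (Set.Ioc 0 L)) ∧ z L = z 0 ∧
        (∀ x ∈ Ioo (0:ℝ) L,
          -(deriv z x) + (∫ σ in Set.Ioc (0:ℝ) L, (starRingEnd ℂ) (g σ) * z σ)
            = lam k * z x))
      ↔ ∃ c : ℂ, ∀ x ∈ Icc (0:ℝ) L, z x = c * φ k x := by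
  haveI fin : IsFiniteMeasure (volume.restrict (Set.Ioc (0:ℝ) L)) :=
    ⟨by rw [Measure.restrict_apply_univ]; exact measure_Ioc_lt_top⟩
  have hLne : (L : ℂ) ≠ 0 := Complex.ofReal_ne_zero.2 hL.ne'
  have hgi : Integrable g (volume.restrict (Set.Ioc 0 L)) := hg.integrable one_le_two
  have hgc : Integrable (fun x => (starRingEnd ℂ) (g x)) (volume.restrict (Set.Ioc 0 L)) := by
    refine ⟨Complex.continuous_conj.comp_aestronglyMeasurable hgi.1, ?_⟩
    simpa [HasFiniteIntegral] using hgi.2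
  intro k z
  rcases eq_or_ne k 0 with rfl | hk
  · -- k = 0 case
    constructor
    · rintro ⟨hc, hd, hmem, hper, hode⟩
      set K : ℂ := ∫ σ in Set.Ioc (0:ℝ) L, (starRingEnd ℂ) (g σ) * z σ with hKdef
      by_cases h0 : lam 0 = 0
      · have heq : ∀ x ∈ Ioo (0:ℝ) L, deriv z x = K := by
          intro x hx
          have h := hode x hx
          rw [h0] at h
          linear_combination -h
        have hform := ode_form0' hL hc hd heq
        have hKzero : K = 0 := by
          have hpL := hform L ⟨hL.le, le_refl L⟩
          rw [hper, hform 0 ⟨le_refl 0, hL.le⟩] at hpL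
          have : K * (L:ℂ) = 0 := by push_cast at hpL ⊢; linear_combination -hpL
          exact (mul_eq_zero.1 this).resolve_right hLne
        exact ⟨z 0, fun x hx => by rw [hφ0 x, hform x hx, hKzero]; ring⟩
      · have heq : ∀ x ∈ Ioo (0:ℝ) L, deriv z x = K - lam 0 * z x := by
          intro x hx; linear_combination -(hode x hx)
        have hform := ode_form' hL h0 hc hd heq
        set A : ℂ := z 0 - K / lam 0 with hA
        by_cases hA0 : A = 0
        · refine ⟨K / lam 0, fun x hx => ?_⟩
          rw [hφ0 x, hform x hx, hA0]; ring
        · exfalso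
          have hper' : A * (Complex.exp (-(lam 0) * L) - 1) = 0 := by
            have h1 := hform L ⟨hL.le, le_refl L⟩
            rw [hper, hform 0 ⟨le_refl 0, hL.le⟩] at h1
            simp only [Complex.ofReal_zero, mul_zero, Complex.exp_zero] at h1
            linear_combination -h1
          have hexp1 : Complex.exp (-(lam 0) * L) = 1 := by
            have := (mul_eq_zero.1 hper').resolve_left hA0
            linear_combination this
          obtain ⟨n, hn⟩ := Complex.exp_eq_one_iff.1 hexp1
          have hn0 : n ≠ 0 := by
            rintro rfl
            simp only [Int.cast_zero, zero_mul] at hn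
            exact h0 (by
              have : lam 0 * L = 0 := by linear_combination -hn
              exact (mul_eq_zero.1 this).resolve_right hLne)
          refine hdisj (-n) (neg_ne_zero.2 hn0) ?_
          rw [hlamk (-n) (neg_ne_zero.2 hn0), eq_div_iff hLne]
          push_cast
          linear_combination -hn
    · rintro ⟨c, h⟩
      have hzc : EqOn z (fun _ => c) (Icc 0 L) := fun x hx => by
        rw [h x hx, hφ0 x, mul_one]
      refine ⟨continuousOn_const.congr hzc, (differentiable_const c).differentiableOn.congr
        (fun x hx => hzc (Ioo_subset_Icc_self hx)), ?_, ?_, ?_⟩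
      · exact (memLp_const c).ae_eq ((ae_restrict_iff' measurableSet_Ioc).2
          (ae_of_all _ fun x hx => (hzc (Ioc_subset_Icc_self hx)).symm))
      · rw [hzc ⟨hL.le, le_refl L⟩, hzc ⟨le_refl 0, hL.le⟩]
      · intro x hx
        have hev : z =ᶠ[𝓝 x] fun _ => c :=
          Filter.eventually_of_mem (isOpen_Ioo.mem_nhds hx)
            fun y hy => hzc (Ioo_subset_Icc_self hy)
        have hstep : (∫ σ in Set.Ioc (0:ℝ) L, (starRingEnd ℂ) (g σ) * z σ)
            = ∫ σ in Set.Ioc (0:ℝ) L, (starRingEnd ℂ) (g σ) * c :=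
          setIntegral_congr_fun measurableSet_Ioc
            (fun σ hσ => by rw [hzc (Ioc_subset_Icc_self hσ)])
        rw [hev.deriv_eq, deriv_const, neg_zero, zero_add, hstep,
          integral_mul_const, ← hlam0, hzc (Ioo_subset_Icc_self hx), mul_comm]
  · -- k ≠ 0 case
    have hlamk' : lam k = ((2 * Real.pi * k / L : ℝ) : ℂ) * Complex.I := by
      rw [hlamk k hk]; push_cast; ring
    have hre : (lam k).re = 0 := by rw [hlamk']; simp
    have hnorm1 : ∀ x : ℝ, ‖Complex.exp (-(lam k) * x)‖ = 1 := by
      intro x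
      rw [Complex.norm_exp]
      simp [Complex.mul_re, hre]
    have hlamne : lam k ≠ 0 := by
      rw [hlamk k hk]
      apply div_ne_zero _ hLne
      apply mul_ne_zero (mul_ne_zero (mul_ne_zero two_ne_zero
        (Complex.ofReal_ne_zero.2 Real.pi_ne_zero)) Complex.I_ne_zero)
        (Int.cast_ne_zero.2 hk)
    have hsub : lam k - lam 0 ≠ 0 := sub_ne_zero_of_ne (hdisj k hk).symm
    have hcexp : Continuous fun x : ℝ => Complex.exp (-(lam k) * x) :=
      Complex.continuous_exp.comp (continuous_const.mul Complex.continuous_ofReal)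
    have intE : Integrable (fun σ : ℝ => Complex.exp (-(lam k) * σ) * (starRingEnd ℂ) (g σ))
        (volume.restrict (Set.Ioc 0 L)) :=
      hgc.bdd_mul hcexp.aestronglyMeasurable (ae_of_all _ fun x => (hnorm1 x).le)
    have intE' : Integrable (fun σ => (starRingEnd ℂ) (g σ) * Complex.exp (-(lam k) * σ))
        (volume.restrict (Set.Ioc 0 L)) :=
      intE.congr (ae_of_all _ fun σ => mul_comm _ _)
    set Ik : ℂ := ∫ y in Set.Ioc (0:ℝ) L,
      (starRingEnd ℂ) (g y) * Complex.exp (-(lam k) * y) with hIk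
    have hexpL : Complex.exp (-(lam k) * L) = 1 := by
      have harg : -(lam k) * L = ((-k : ℤ) : ℂ) * (2 * Real.pi * Complex.I) := by
        rw [hlamk k hk]
        have hdm : 2 * (Real.pi : ℂ) * Complex.I * k / L * L = 2 * Real.pi * Complex.I * k :=
          div_mul_cancel₀ _ hLne
        push_cast
        linear_combination -hdm
      rw [harg, Complex.exp_int_mul_two_pi_mul_I]
    constructor
    · rintro ⟨hc, hd, hmem, hper, hode⟩
      set K : ℂ := ∫ σ in Set.Ioc (0:ℝ) L, (starRingEnd ℂ) (g σ) * z σ with hKdef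
      have heq : ∀ x ∈ Ioo (0:ℝ) L, deriv z x = K - lam k * z x := by
        intro x hx; linear_combination -(hode x hx)
      have hform := ode_form' hL hlamne hc hd heq
      set A : ℂ := z 0 - K / lam k with hA
      have hK : K = A * Ik + K / lam k * lam 0 := by
        have h1 : K = ∫ σ in Set.Ioc (0:ℝ) L,
            (A * ((starRingEnd ℂ) (g σ) * Complex.exp (-(lam k) * σ))
              + (K / lam k) * (starRingEnd ℂ) (g σ)) := by
          rw [hKdef]
          apply setIntegral_congr_fun measurableSet_Ioc
          intro σ hσ
          dsimp only
          rw [hform σ (Ioc_subset_Icc_self hσ)]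
          ring
        have h2 : (∫ σ in Set.Ioc (0:ℝ) L,
            (A * ((starRingEnd ℂ) (g σ) * Complex.exp (-(lam k) * σ))
              + (K / lam k) * (starRingEnd ℂ) (g σ)))
            = A * Ik + K / lam k * lam 0 := by
          rw [integral_add (intE'.const_mul A) (hgc.const_mul _),
            integral_const_mul, integral_const_mul, ← hlam0, ← hIk]
        exact h1.trans h2
      have hKl : (K / lam k) * (lam k - lam 0) = A * Ik := by
        have hQ : K / lam k * lam k = K := div_mul_cancel₀ K hlamne
        linear_combination hQ + hK
      refine ⟨A, fun x hx => ?_⟩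
      rw [hφk k hk x, hform x hx, ← hIk]
      have hKdiv : K / lam k = A * (1 / (lam k - lam 0) * Ik) := by
        rw [eq_comm, mul_comm, mul_assoc, mul_comm Ik A, ← hKl]
        field_simp
      rw [hKdiv]
      ring
    · rintro ⟨c, h⟩
      set C : ℂ := 1 / (lam k - lam 0) * Ik with hC
      have hzψ : EqOn z (fun x : ℝ => c * (Complex.exp (-(lam k) * x) + C)) (Icc 0 L) :=
        fun x hx => by rw [h x hx, hφk k hk x]
      have hψcont : Continuous fun x : ℝ => c * (Complex.exp (-(lam k) * x) + C) :=
        continuous_const.mul (hcexp.add continuous_const)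
      have hψd : ∀ x : ℝ, HasDerivAt (fun x : ℝ => c * (Complex.exp (-(lam k) * x) + C))
          (c * (-(lam k) * Complex.exp (-(lam k) * x))) x :=
        fun x => ((hasDerivAt_cexp_mul' (-(lam k)) x).add_const C).const_mul c
      have hψdiff : DifferentiableOn ℝ (fun x : ℝ => c * (Complex.exp (-(lam k) * x) + C)) (Ioo 0 L) :=
        fun x _ => (hψd x).differentiableAt.differentiableWithinAt
      refine ⟨hψcont.continuousOn.congr hzψ,
        hψdiff.congr (fun x hx => hzψ (Ioo_subset_Icc_self hx)), ?_, ?_, ?_⟩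
      · -- Memℒp
        have hψmem : MemLp (fun x : ℝ => c * (Complex.exp (-(lam k) * x) + C)) 2
            (volume.restrict (Set.Ioc 0 L)) := by
          refine MemLp.const_mul ?_ c
          exact (MemLp.of_bound hcexp.aestronglyMeasurable 1
            (ae_of_all _ fun x => (hnorm1 x).le)).add (memLp_const C)
        exact hψmem.ae_eq ((ae_restrict_iff' measurableSet_Ioc).2
          (ae_of_all _ fun x hx => (hzψ (Ioc_subset_Icc_self hx)).symm))
      · -- periodicity
        have h1 := hzψ ⟨hL.le, le_refl L⟩
        have h2 := hzψ ⟨le_refl 0, hL.le⟩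
        dsimp only at h1 h2
        rw [h1, h2, hexpL]
        norm_num
      · -- ODE
        intro x hx
        have hev : z =ᶠ[𝓝 x] fun y : ℝ => c * (Complex.exp (-(lam k) * y) + C) :=
          Filter.eventually_of_mem (isOpen_Ioo.mem_nhds hx)
            fun y hy => hzψ (Ioo_subset_Icc_self hy)
        rw [hev.deriv_eq, (hψd x).deriv, hzψ (Ioo_subset_Icc_self hx)]
        have hint : (∫ σ in Set.Ioc (0:ℝ) L, (starRingEnd ℂ) (g σ) * z σ)
            = c * Ik + c * C * lam 0 := by
          have hstep : (∫ σ in Set.Ioc (0:ℝ) L, (starRingEnd ℂ) (g σ) * z σ)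
              = ∫ σ in Set.Ioc (0:ℝ) L,
                (c * ((starRingEnd ℂ) (g σ) * Complex.exp (-(lam k) * σ))
                  + (c * C) * (starRingEnd ℂ) (g σ)) :=
            setIntegral_congr_fun measurableSet_Ioc
              (fun σ hσ => by rw [hzψ (Ioc_subset_Icc_self hσ)]; ring)
          rw [hstep, integral_add (intE'.const_mul c) (hgc.const_mul _),
            integral_const_mul, integral_const_mul, ← hlam0, ← hIk]
        rw [hint]
        dsimp only
        have hinv : (lam k - lam 0)⁻¹ * (lam k - lam 0) = 1 := inv_mul_cancel₀ hsub
        linear_combination (-(c * Ik)) * hinv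
end

section
/- Suppose H is a Hilbert space and (f_k)_{k∈ℤ} a sequence in H such that there exist constants m, M > 0 with m∑|α_k|² ≤ ‖∑ α_k f_k‖² ≤ M∑|α_k|² for all finite scalar sequences (α_k), and (f_k) has dense span. Then for every sequence (c_k) ∈ ℓ²(ℤ) there exists f ∈ H with ⟨f, f_k⟩ = c_k for all k ∈ ℤ (the moment problem is solvable), and this f is unique. -/
open MeasureTheory Filter

noncomputable section AuxStmt10

variable {H : Type*} [NormedAddCommGroup H] [InnerProductSpace ℂ H] [CompleteSpace H]

private lemma aux10_sq_summable (x : lp (fun _ : ℤ => ℂ) 2) :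
    Summable (fun k => ‖x k‖ ^ 2) := by
  have := (lp.memℓp x).summable (p := 2) (by norm_num)
  simpa using this

private lemma aux10_summable (f : ℤ → H) (M : ℝ) (hM : 0 < M)
    (hup : ∀ (s : Finset ℤ) (α : ℤ → ℂ),
      ‖∑ k ∈ s, α k • f k‖ ^ 2 ≤ M * (∑ k ∈ s, ‖α k‖ ^ 2))
    (x : lp (fun _ : ℤ => ℂ) 2) : Summable (fun k => x k • f k) := by
  rw [summable_iff_vanishing_norm]
  intro ε hε
  obtain ⟨s, hs⟩ := summable_iff_vanishing_norm.mp (aux10_sq_summable x) (ε ^ 2 / M)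
    (by positivity)
  refine ⟨s, fun t ht => ?_⟩
  have h2 := hs t ht
  have h4 : ‖∑ k ∈ t, x k • f k‖ ^ 2 < ε ^ 2 := by
    calc ‖∑ k ∈ t, x k • f k‖ ^ 2 ≤ M * ∑ k ∈ t, ‖x k‖ ^ 2 := hup t x
    _ < M * (ε ^ 2 / M) := by
        refine mul_lt_mul_of_pos_left ?_ hM
        exact lt_of_le_of_lt (le_abs_self _) (by simpa [Real.norm_eq_abs] using h2)
    _ = ε ^ 2 := by field_simp
  exact lt_of_pow_lt_pow_left₀ 2 hε.le h4

private def aux10TL (f : ℤ → H)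
    (hsum : ∀ x : lp (fun _ : ℤ => ℂ) 2, Summable fun k => x k • f k) :
    lp (fun _ : ℤ => ℂ) 2 →ₗ[ℂ] H where
  toFun x := ∑' k, x k • f k
  map_add' x y := by
    have h : (fun k => ((x + y) : lp (fun _ : ℤ => ℂ) 2) k • f k)
        = fun k => x k • f k + y k • f k := by
      ext k
      rw [lp.coeFn_add]
      simp [add_smul]
    beta_reduce
    rw [h, Summable.tsum_add (hsum x) (hsum y)]
  map_smul' a x := by
    have h : (fun k => ((a • x) : lp (fun _ : ℤ => ℂ) 2) k • f k)
        = fun k => a • (x k • f k) := by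
      ext k
      rw [lp.coeFn_smul]
      simp [smul_smul]
    beta_reduce
    simp only [RingHom.id_apply]
    rw [h]
    exact Summable.tsum_const_smul a (hsum x)

end AuxStmt10

/-- For a Riesz sequence `(f_k)_{k∈ℤ}` with dense span in a Hilbert space `H`,
the moment problem `⟨f, f_k⟩ = c_k` has a unique solution for every `(c_k) ∈ ℓ²(ℤ)`. -/
theorem stmt10 {H : Type*} [NormedAddCommGroup H] [InnerProductSpace ℂ H] [CompleteSpace H]
    (f : ℤ → H) (m M : ℝ) (hm : 0 < m) (hM : 0 < M)
    (hRiesz : ∀ (s : Finset ℤ) (α : ℤ → ℂ),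
      m * (∑ k ∈ s, ‖α k‖ ^ 2) ≤ ‖∑ k ∈ s, α k • f k‖ ^ 2 ∧
        ‖∑ k ∈ s, α k • f k‖ ^ 2 ≤ M * (∑ k ∈ s, ‖α k‖ ^ 2))
    (hdense : (Submodule.span ℂ (Set.range f)).topologicalClosure = ⊤) :
    ∀ c : ℤ → ℂ, Summable (fun k => ‖c k‖ ^ 2) →
      ∃! v : H, ∀ k : ℤ, (inner ℂ v (f k) : ℂ) = c k := by
  classical
  intro c hc
  have hup := fun s α => (hRiesz s α).2
  have hlow := fun s α => (hRiesz s α).1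
  have hsum := aux10_summable f M hM hup
  set T0 := aux10TL f hsum with hT0
  have hT0app : ∀ x, T0 x = ∑' k, x k • f k := fun _ => rfl
  have hx2 : ∀ x : lp (fun _ : ℤ => ℂ) 2, ‖x‖ ^ 2 = ∑' k, ‖x k‖ ^ 2 := by
    intro x
    have h := lp.norm_rpow_eq_tsum (p := 2) (by norm_num) x
    simpa using h
  have hbounds : ∀ x : lp (fun _ : ℤ => ℂ) 2,
      m * ‖x‖ ^ 2 ≤ ‖T0 x‖ ^ 2 ∧ ‖T0 x‖ ^ 2 ≤ M * ‖x‖ ^ 2 := by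
    intro x
    have hS := (hsum x).hasSum
    rw [← hT0app x] at hS
    have h1 : Tendsto (fun s : Finset ℤ => ‖∑ k ∈ s, x k • f k‖ ^ 2) atTop
        (nhds (‖T0 x‖ ^ 2)) := hS.norm.pow 2
    have h2 : Tendsto (fun s : Finset ℤ => ∑ k ∈ s, ‖x k‖ ^ 2) atTop
        (nhds (∑' k, ‖x k‖ ^ 2)) := (aux10_sq_summable x).hasSum
    rw [hx2 x]
    constructor
    · exact le_of_tendsto_of_tendsto' (h2.const_mul m) h1 (fun s => hlow s x)
    · exact le_of_tendsto_of_tendsto' h1 (h2.const_mul M) (fun s => hup s x)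
  have hcont : ∀ x, ‖T0 x‖ ≤ Real.sqrt M * ‖x‖ := by
    intro x
    have h : ‖T0 x‖ ^ 2 ≤ (Real.sqrt M * ‖x‖) ^ 2 := by
      rw [mul_pow, Real.sq_sqrt hM.le]; exact (hbounds x).2
    calc ‖T0 x‖ = Real.sqrt (‖T0 x‖ ^ 2) := (Real.sqrt_sq (norm_nonneg _)).symm
    _ ≤ Real.sqrt ((Real.sqrt M * ‖x‖) ^ 2) := Real.sqrt_le_sqrt h
    _ = Real.sqrt M * ‖x‖ := Real.sqrt_sq (by positivity)
  set T : lp (fun _ : ℤ => ℂ) 2 →L[ℂ] H := T0.mkContinuous (Real.sqrt M) hcont with hT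
  have hTapp : ∀ x, T x = T0 x := fun _ => rfl
  have hkey : ∀ z : lp (fun _ : ℤ => ℂ) 2, ‖z‖ ≤ (Real.sqrt m)⁻¹ * ‖T z‖ := by
    intro z
    have h := (hbounds z).1
    have h2 : Real.sqrt m * ‖z‖ ≤ ‖T0 z‖ := by
      have h3 := Real.sqrt_le_sqrt h
      rwa [Real.sqrt_mul hm.le, Real.sqrt_sq (norm_nonneg _),
        Real.sqrt_sq (norm_nonneg _)] at h3
    rw [hTapp, inv_mul_eq_div, le_div_iff₀ (Real.sqrt_pos.mpr hm)]
    linarith [h2]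
  have hanti : AntilipschitzWith ⟨(Real.sqrt m)⁻¹, by positivity⟩ T := by
    refine AntilipschitzWith.of_le_mul_dist fun x y => ?_
    have := hkey (x - y)
    rw [map_sub] at this
    rw [dist_eq_norm, dist_eq_norm]; exact this
  have hinj : Function.Injective T := hanti.injective
  have hker : LinearMap.ker (T : lp (fun _ : ℤ => ℂ) 2 →ₗ[ℂ] H) = ⊥ := LinearMap.ker_eq_bot.mpr hinj
  have hfk : ∀ k, T (lp.single 2 k 1) = f k := by
    intro k
    rw [hTapp, hT0app]
    rw [tsum_eq_single k ?_]
    · rw [lp.single_apply_self]; simp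
    · intro j hj
      rw [lp.single_apply_ne _ _ _ hj, zero_smul]
  have hrange : LinearMap.range (T : lp (fun _ : ℤ => ℂ) 2 →ₗ[ℂ] H) = ⊤ := by
    have hsub : Submodule.span ℂ (Set.range f) ≤ LinearMap.range (T : lp (fun _ : ℤ => ℂ) 2 →ₗ[ℂ] H) := by
      rw [Submodule.span_le]
      rintro _ ⟨k, rfl⟩
      exact ⟨lp.single 2 k 1, hfk k⟩
    have hclosed : IsClosed ((LinearMap.range (T : lp (fun _ : ℤ => ℂ) 2 →ₗ[ℂ] H) : Submodule ℂ H) : Set H) := by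
      have h := hanti.isClosed_range T.uniformContinuous
      have heq : ((LinearMap.range (T : lp (fun _ : ℤ => ℂ) 2 →ₗ[ℂ] H) : Submodule ℂ H) : Set H) = Set.range T := by
        ext y; simp
      rw [heq]; exact h
    rw [← top_le_iff, ← hdense]
    exact Submodule.topologicalClosure_minimal _ hsub hclosed
  set E := ContinuousLinearEquiv.ofBijective T hker hrange with hE
  have hEk : ∀ k, E.symm (f k) = lp.single 2 k 1 := by
    intro k
    have : E (lp.single 2 k 1) = f k := hfk k
    rw [← this, ContinuousLinearEquiv.symm_apply_apply]
  have hg : Memℓp (fun k : ℤ => (starRingEnd ℂ) (c k)) 2 := by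
    apply memℓp_gen
    simpa using hc
  set g : lp (fun _ : ℤ => ℂ) 2 := ⟨fun k => (starRingEnd ℂ) (c k), hg⟩ with hgdef
  set φ : H →L[ℂ] ℂ := (innerSL ℂ g).comp (E.symm : H →L[ℂ] lp (fun _ : ℤ => ℂ) 2) with hφ
  set v : H := (InnerProductSpace.toDual ℂ H).symm φ with hv
  have hvinner : ∀ h : H, (inner ℂ v h : ℂ) = φ h := fun h =>
    InnerProductSpace.toDual_symm_apply
  have hsol : ∀ k : ℤ, (inner ℂ v (f k) : ℂ) = c k := by
    intro k
    rw [hvinner (f k)]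
    have : φ (f k) = (inner ℂ g (lp.single 2 k (1 : ℂ)) : ℂ) := by
      simp only [hφ, ContinuousLinearMap.comp_apply, ContinuousLinearEquiv.coe_coe,
        hEk k, innerSL_apply_apply]
    rw [this, lp.inner_single_right]
    have hgk : (g : ∀ _ : ℤ, ℂ) k = (starRingEnd ℂ) (c k) := rfl
    simp [hgk, RCLike.inner_apply]
  refine ⟨v, hsol, fun w hw => ?_⟩
  have horthbot : (Submodule.span ℂ (Set.range f))ᗮ = ⊥ :=
    Submodule.topologicalClosure_eq_top_iff.mp hdense
  have hmem : w - v ∈ (Submodule.span ℂ (Set.range f))ᗮ := by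
    rw [Submodule.mem_orthogonal']
    have hle : Submodule.span ℂ (Set.range f) ≤ LinearMap.ker (innerSL ℂ (w - v) : H →ₗ[ℂ] ℂ) := by
      rw [Submodule.span_le]
      rintro _ ⟨k, rfl⟩
      simp [LinearMap.mem_ker, inner_sub_left, hw k, hsol k]
    intro u hu
    have := hle hu
    simpa [LinearMap.mem_ker, inner_sub_left] using this
  rw [horthbot, Submodule.mem_bot, sub_eq_zero] at hmem
  exact hmem
end

section
/- Let A₀*, A*, B*, P be as follows: P : L²(0,L) → L²(0,L) bounded linear with N := ker P* satisfying (i) N ⊆ D(A*), (ii) N ⊆ ker B*, (iii) dim N < ∞, and the intertwining relation A₀*P*z = P*A*z for all z ∈ ker B* holds. If moreover ker(λ - A*) ∩ ker B* = {0} for every λ ∈ ℂ, then ker P* = {0}. -/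
open MeasureTheory ContinuousLinearMap

/-- Direct direction of Lemma 3: if `N = ker P*` satisfies `N ⊆ D(A*)`, `N ⊆ ker B*`,
`dim N < ∞`, the intertwining relation `A₀* P* z = P* A* z` holds on `ker B*`, and the
Fattorini criterion `ker(λ - A*) ∩ ker B* = {0}` holds for every `λ`, then `ker P* = {0}`. -/
theorem stmt12 (L : ℝ) (hL : 0 < L)
    (DA DA0 : Set (Lp ℂ 2 (volume.restrict (Set.Ioc (0:ℝ) L))))
    (Astar A0star : Lp ℂ 2 (volume.restrict (Set.Ioc (0:ℝ) L)) →
      Lp ℂ 2 (volume.restrict (Set.Ioc (0:ℝ) L)))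
    (Bstar : Lp ℂ 2 (volume.restrict (Set.Ioc (0:ℝ) L)) → ℂ)
    (hBlin : ∀ (a b : ℂ) (z w : Lp ℂ 2 (volume.restrict (Set.Ioc (0:ℝ) L))),
      z ∈ DA → w ∈ DA → Bstar (a • z + b • w) = a * Bstar z + b * Bstar w)
    (hAlin : ∀ (a b : ℂ) (z w : Lp ℂ 2 (volume.restrict (Set.Ioc (0:ℝ) L))),
      z ∈ DA → w ∈ DA → a • z + b • w ∈ DA ∧
        Astar (a • z + b • w) = a • Astar z + b • Astar w)
    (P : Lp ℂ 2 (volume.restrict (Set.Ioc (0:ℝ) L)) →L[ℂ]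
      Lp ℂ 2 (volume.restrict (Set.Ioc (0:ℝ) L)))
    (hNsubDA : ∀ z, ContinuousLinearMap.adjoint P z = 0 → z ∈ DA)
    (hNsubB : ∀ z, ContinuousLinearMap.adjoint P z = 0 → Bstar z = 0)
    (hNfin : FiniteDimensional ℂ (LinearMap.ker (ContinuousLinearMap.adjoint P).toLinearMap))
    (hintertwine : ∀ z ∈ DA, Bstar z = 0 →
      A0star (ContinuousLinearMap.adjoint P z) = ContinuousLinearMap.adjoint P (Astar z))
    (hFattorini : ∀ lam : ℂ, ∀ z ∈ DA, Astar z = lam • z → Bstar z = 0 → z = 0) :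
    ∀ z, ContinuousLinearMap.adjoint P z = 0 → z = 0 := by

  intro z0 hz0
  by_contra hz0ne
  set Pd := ContinuousLinearMap.adjoint P with hPd
  -- basic facts at 0
  have h0DA : (0 : Lp ℂ 2 (volume.restrict (Set.Ioc (0:ℝ) L))) ∈ DA := hNsubDA 0 (map_zero _)
  have hA0 : Astar 0 = 0 := by
    have h := (hAlin 1 (-1) 0 0 h0DA h0DA).2
    simpa using h
  -- N is invariant under Astar
  have hinv : ∀ z, Pd z = 0 → Pd (Astar z) = 0 := by
    intro z hz
    have hB := hNsubB z hz
    have h1 := hintertwine z (hNsubDA z hz) hB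
    have h2 := hintertwine 0 h0DA (hNsubB 0 (map_zero _))
    rw [hz] at h1
    rw [map_zero, hA0, map_zero] at h2
    rw [← h1, h2]
  -- the endomorphism of N induced by Astar
  set N := LinearMap.ker Pd.toLinearMap with hN
  have memN : ∀ z, z ∈ N ↔ Pd z = 0 := by intro z; simp [hN, LinearMap.mem_ker]
  let f : N →ₗ[ℂ] N :=
    { toFun := fun x => ⟨Astar x.1, (memN _).2 (hinv x.1 ((memN _).1 x.2))⟩
      map_add' := by
        intro x y
        apply Subtype.ext
        have h := (hAlin 1 1 x.1 y.1 (hNsubDA x.1 ((memN _).1 x.2))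
          (hNsubDA y.1 ((memN _).1 y.2))).2
        simp only [one_smul] at h
        exact h
      map_smul' := by
        intro a x
        apply Subtype.ext
        have h := (hAlin a 0 x.1 0 (hNsubDA x.1 ((memN _).1 x.2)) h0DA).2
        simp only [smul_zero, add_zero, zero_smul] at h
        exact h }
  have : Nontrivial N := by
    refine ⟨⟨z0, (memN _).2 hz0⟩, 0, ?_⟩
    intro h
    exact hz0ne (by simpa using congrArg Subtype.val h)
  haveI : FiniteDimensional ℂ N := hNfin
  obtain ⟨lam, hlam⟩ := Module.End.exists_eigenvalue f
  obtain ⟨v, hv⟩ := hlam.exists_hasEigenvector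
  have hv1 : Astar v.1 = lam • v.1 := by
    have := congrArg Subtype.val hv.apply_eq_smul
    exact this
  have hv0 : v.1 = 0 :=
    hFattorini lam v.1 (hNsubDA v.1 ((memN _).1 v.2)) hv1
      (hNsubB v.1 ((memN _).1 v.2))
  exact hv.2 (Subtype.ext hv0)
end
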